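/- Let ω ∈ 𝓑'₀ have power series expansion ω(z) = c₁z + c₂z² + c₃z³ + ⋯ on 𝔻, let μ ∈ ℂ, and suppose |μ| ≤ (4/3)·|c₁|/(1 + |c₁|). Then |c₁c₃ − μc₂²| ≤ (1/3)·|c₁|·(1 − |c₁|²). -/

import Mathlib

open Complex Metric Set Function


-- |w - a| ≤ |1 - conj a * w| when |a| ≤ 1 and |w| ≤ 1
lemma mob_le {a w : ℂ} (ha : ‖a‖ ≤ 1) (hw : ‖w‖ ≤ 1) :
    ‖w - a‖ ≤ ‖1 - (starRingEnd ℂ) a * w‖ := by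
  have hns : normSq (w - a) ≤ normSq (1 - (starRingEnd ℂ) a * w) := by
    have key : normSq (1 - (starRingEnd ℂ) a * w) - normSq (w - a)
        = (1 - normSq a) * (1 - normSq w) := by
      simp only [normSq_apply, Complex.sub_re, Complex.sub_im, Complex.mul_re, Complex.mul_im,
        Complex.conj_re, Complex.conj_im, Complex.one_re, Complex.one_im]
      ring
    have ha2 : normSq a ≤ 1 := by
      rw [← Complex.sq_norm]; nlinarith [norm_nonneg a]
    have hw2 : normSq w ≤ 1 := by
      rw [← Complex.sq_norm]; nlinarith [norm_nonneg w]
    nlinarith [normSq_nonneg a, normSq_nonneg w]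
  simpa only [Complex.norm_def] using Real.sqrt_le_sqrt hns

lemma den_ne {a w : ℂ} (ha : ‖a‖ < 1) (hw : ‖w‖ ≤ 1) :
    1 - (starRingEnd ℂ) a * w ≠ 0 := by
  intro h
  have h2 : (starRingEnd ℂ) a * w = 1 := by linear_combination -h
  have : ‖(starRingEnd ℂ) a * w‖ = 1 := by rw [h2]; simp
  rw [norm_mul, Complex.norm_conj] at this
  nlinarith [norm_nonneg a, norm_nonneg w]

-- Schwarz bound on dslope
lemma dslope_bd {h : ℂ → ℂ} (hdiff : DifferentiableOn ℂ h (ball 0 1)) (h0 : h 0 = 0)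
    (hb : ∀ z ∈ ball (0:ℂ) 1, ‖h z‖ ≤ 1) {z : ℂ} (hz : z ∈ ball (0:ℂ) 1) :
    ‖dslope h 0 z‖ ≤ 1 := by
  refine le_of_forall_pos_le_add fun ε hε => ?_
  have maps : MapsTo h (ball 0 1) (ball (h 0) (1 + ε)) := by
    intro x hx
    rw [mem_ball, h0, dist_eq_norm]
    simpa using lt_of_le_of_lt (hb x hx) (by linarith)
  have := Complex.norm_dslope_le_div_of_mapsTo_ball hdiff (maps.mono_right ball_subset_closedBall) hz
  simpa using this


lemma keyCore (f : ℂ → ℂ) (hd : DifferentiableOn ℂ f (ball 0 1))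
    (hb : ∀ z ∈ ball (0:ℂ) 1, ‖f z‖ ≤ 1) (ha : ‖f 0‖ < 1) :
    ∃ g : ℂ → ℂ, DifferentiableOn ℂ g (ball 0 1) ∧
      (∀ z ∈ ball (0:ℂ) 1, ‖g z‖ ≤ 1) ∧
      g 0 = deriv f 0 / (1 - (starRingEnd ℂ) (f 0) * f 0) ∧
      deriv g 0 = (deriv (deriv f) 0 * (1 - (starRingEnd ℂ) (f 0) * f 0)
          + 2 * (starRingEnd ℂ) (f 0) * (deriv f 0) ^ 2)
        / (2 * (1 - (starRingEnd ℂ) (f 0) * f 0) ^ 2) := by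
  set a := f 0 with ha0
  set u := (starRingEnd ℂ) a with hu
  set dC := 1 - u * a with hdC
  have h0mem : (0:ℂ) ∈ ball (0:ℂ) 1 := mem_ball_self one_pos
  have hdC0 : dC ≠ 0 := den_ne ha (hb 0 h0mem)
  have hden : ∀ z ∈ ball (0:ℂ) 1, 1 - u * f z ≠ 0 := fun z hz => den_ne ha (hb z hz)
  set h : ℂ → ℂ := fun z => (f z - a) / (1 - u * f z) with hh
  have hdiff : DifferentiableOn ℂ h (ball 0 1) :=
    (hd.sub_const a).div ((differentiableOn_const 1).sub (hd.const_mul u)) hden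
  have h0 : h 0 = 0 := by simp [hh, ← ha0]
  have hb' : ∀ z ∈ ball (0:ℂ) 1, ‖h z‖ ≤ 1 := by
    intro z hz
    rw [hh]
    simp only [norm_div]
    rw [div_le_one ((norm_pos_iff).mpr (hden z hz))]
    exact mob_le ha.le (hb z hz)
  have hfa : AnalyticOnNhd ℂ f (ball 0 1) := hd.analyticOnNhd isOpen_ball
  have hf'a : AnalyticOnNhd ℂ (deriv f) (ball 0 1) := hfa.deriv
  have hf'd : ∀ z ∈ ball (0:ℂ) 1, HasDerivAt f (deriv f z) z := fun z hz =>
    (hd.differentiableAt (isOpen_ball.mem_nhds hz)).hasDerivAt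
  have hderiv : ∀ z ∈ ball (0:ℂ) 1,
      HasDerivAt h (deriv f z * dC / (1 - u * f z) ^ 2) z := by
    intro z hz
    have hnum : HasDerivAt (fun w => f w - a) (deriv f z) z := (hf'd z hz).sub_const a
    have hden' : HasDerivAt (fun w => 1 - u * f w) (-(u * deriv f z)) z :=
      ((hf'd z hz).const_mul u).const_sub 1
    have := hnum.div hden' (hden z hz)
    refine this.congr_deriv ?_
    rw [hdC]
    ring
  set g : ℂ → ℂ := dslope h 0 with hg
  have gdiff : DifferentiableOn ℂ g (ball 0 1) :=
    (differentiableOn_dslope (ball_mem_nhds _ one_pos)).mpr hdiff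
  have gb : ∀ z ∈ ball (0:ℂ) 1, ‖g z‖ ≤ 1 := fun z hz =>
    dslope_bd hdiff h0 hb' hz
  have g0 : g 0 = deriv f 0 / dC := by
    rw [hg, dslope_same, (hderiv 0 h0mem).deriv]
    rw [ha0] at *
    rw [show (1 : ℂ) - u * f 0 = dC from rfl]
    field_simp
  refine ⟨g, gdiff, gb, g0, ?_⟩
  -- h z = z * g z everywhere
  have hzg : ∀ z : ℂ, h z = z * g z := by
    intro z
    have := sub_smul_dslope h 0 z
    simpa [h0, smul_eq_mul] using this.symm
  -- deriv g analytic => differentiable at 0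
  have gan : AnalyticOnNhd ℂ g (ball 0 1) := gdiff.analyticOnNhd isOpen_ball
  have g'd : DifferentiableAt ℂ (deriv g) 0 :=
    ((gan.deriv) 0 h0mem).differentiableAt
  have gd0 : HasDerivAt g (deriv g 0) 0 :=
    (gdiff.differentiableAt (isOpen_ball.mem_nhds h0mem)).hasDerivAt
  have g'dOn : ∀ z ∈ ball (0:ℂ) 1, HasDerivAt g (deriv g z) z := fun z hz =>
    (gdiff.differentiableAt (isOpen_ball.mem_nhds hz)).hasDerivAt
  -- On the ball, deriv h z = g z + z * deriv g z
  have derivh : ∀ z ∈ ball (0:ℂ) 1, deriv h z = g z + z * deriv g z := by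
    intro z hz
    have H1 : HasDerivAt (fun w : ℂ => w * g w) (1 * g z + z * deriv g z) z :=
      (hasDerivAt_id z).mul (g'dOn z hz)
    have H2 : HasDerivAt h (1 * g z + z * deriv g z) z := by
      have : (fun w : ℂ => w * g w) = h := by funext w; rw [hzg w]
      rwa [this] at H1
    rw [H2.deriv]; ring
  -- the two expressions for deriv h agree on the ball
  have eqOnBall : Set.EqOn (fun z => g z + z * deriv g z)
      (fun z => deriv f z * dC / (1 - u * f z) ^ 2) (ball 0 1) := by
    intro z hz
    simp only
    rw [← derivh z hz, (hderiv z hz).deriv]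
  -- derivative of LHS at 0
  have hg'' : DifferentiableAt ℂ (fun z : ℂ => z * deriv g z) 0 :=
    (differentiableAt_id.mul g'd)
  have hL : HasDerivAt (fun z => g z + z * deriv g z)
      (deriv g 0 + (1 * deriv g 0 + 0 * deriv (deriv g) 0)) 0 := by
    exact gd0.add ((hasDerivAt_id (0:ℂ)).mul g'd.hasDerivAt)
  -- derivative of RHS at 0
  have hf'' : HasDerivAt (deriv f) (deriv (deriv f) 0) 0 :=
    ((hf'a 0 h0mem).differentiableAt).hasDerivAt
  have hN : HasDerivAt (fun z => deriv f z * dC) (deriv (deriv f) 0 * dC) 0 :=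
    hf''.mul_const dC
  have hMbase : HasDerivAt (fun w => 1 - u * f w) (-(u * deriv f 0)) 0 :=
    ((hf'd 0 h0mem).const_mul u).const_sub 1
  have hM : HasDerivAt (fun z => (1 - u * f z) ^ 2)
      (2 * (1 - u * f 0) ^ 1 * -(u * deriv f 0)) 0 := hMbase.pow 2
  have hM0 : ((1:ℂ) - u * f 0) ^ 2 ≠ 0 := pow_ne_zero 2 hdC0
  have hR : HasDerivAt (fun z => deriv f z * dC / (1 - u * f z) ^ 2)
      ((deriv (deriv f) 0 * dC * (1 - u * f 0) ^ 2
        - deriv f 0 * dC * (2 * (1 - u * f 0) ^ 1 * -(u * deriv f 0)))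
        / ((1 - u * f 0) ^ 2) ^ 2) 0 := hN.div hM hM0
  -- transfer: LHS has the RHS derivative
  have hLR : HasDerivAt (fun z => g z + z * deriv g z)
      ((deriv (deriv f) 0 * dC * (1 - u * f 0) ^ 2
        - deriv f 0 * dC * (2 * (1 - u * f 0) ^ 1 * -(u * deriv f 0)))
        / ((1 - u * f 0) ^ 2) ^ 2) 0 := by
    refine hR.congr_of_eventuallyEq ?_
    filter_upwards [isOpen_ball.mem_nhds h0mem] with z hz
    exact eqOnBall hz
  have key := hL.unique hLR
  have hfa0 : (1:ℂ) - u * f 0 = dC := rfl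
  rw [hfa0] at key
  have key2 : 2 * deriv g 0 = (deriv (deriv f) 0 * dC * dC ^ 2
        - deriv f 0 * dC * (2 * dC ^ 1 * -(u * deriv f 0))) / (dC ^ 2) ^ 2 := by
    rw [← key]; ring
  rw [eq_div_iff (by simp [hdC0] : (2:ℂ) * dC ^ 2 ≠ 0)]
  have h4 : (dC:ℂ) ^ 2 ≠ 0 := pow_ne_zero 2 hdC0
  rw [eq_div_iff (by simpa using h4 : ((dC:ℂ) ^ 2) ^ 2 ≠ 0)] at key2
  apply mul_left_cancel₀ h4
  linear_combination key2


lemma dC_eq (a : ℂ) : (1 : ℂ) - (starRingEnd ℂ) a * a = ((1 - ‖a‖ ^ 2 : ℝ) : ℂ) := by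
  rw [mul_comm, Complex.mul_conj, ← Complex.normSq_eq_norm_sq]
  push_cast
  ring

lemma const_ball {f : ℂ → ℂ} (hd : DifferentiableOn ℂ f (ball 0 1))
    (hb : ∀ z ∈ ball (0:ℂ) 1, ‖f z‖ ≤ 1) (h1 : ‖f 0‖ = 1) :
    Set.EqOn f (Function.const ℂ (f 0)) (ball 0 1) :=
  Complex.eqOn_of_isPreconnected_of_isMaxOn_norm (convex_ball (0:ℂ) 1).isPreconnected
    isOpen_ball hd (mem_ball_self one_pos)
    (fun z hz => by
      simpa [h1] using hb z hz)

lemma sp0 (f : ℂ → ℂ) (hd : DifferentiableOn ℂ f (ball 0 1))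
    (hb : ∀ z ∈ ball (0:ℂ) 1, ‖f z‖ ≤ 1) :
    ‖deriv f 0‖ ≤ 1 - ‖f 0‖ ^ 2 := by
  have h0mem : (0:ℂ) ∈ ball (0:ℂ) 1 := mem_ball_self one_pos
  have hle := hb 0 h0mem
  rcases hle.lt_or_eq with ha | ha
  · obtain ⟨g, gdiff, gb, g0, -⟩ := keyCore f hd hb ha
    have hB := gb 0 h0mem
    rw [g0] at hB
    have hpos : (0:ℝ) < 1 - ‖f 0‖ ^ 2 := by nlinarith [norm_nonneg (f 0)]
    rw [norm_div, dC_eq, Complex.norm_real, Real.norm_eq_abs, abs_of_pos hpos, div_le_one hpos] at hB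
    exact hB
  · have heq := const_ball hd hb ha
    have hev : f =ᶠ[nhds (0:ℂ)] (fun _ => f 0) :=
      Filter.eventuallyEq_of_mem (isOpen_ball.mem_nhds h0mem) (fun z hz => heq hz)
    rw [hev.deriv_eq, deriv_const]
    simp [ha]

lemma schur2 (f : ℂ → ℂ) (hd : DifferentiableOn ℂ f (ball 0 1))
    (hb : ∀ z ∈ ball (0:ℂ) 1, ‖f z‖ ≤ 1) (ha : ‖f 0‖ < 1) :
    ‖deriv (deriv f) 0 * (1 - (starRingEnd ℂ) (f 0) * f 0)
        + 2 * (starRingEnd ℂ) (f 0) * (deriv f 0) ^ 2‖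
      ≤ 2 * (1 - ‖f 0‖ ^ 2) ^ 2
        * (1 - (‖deriv f 0‖ / (1 - ‖f 0‖ ^ 2)) ^ 2) := by
  obtain ⟨g, gdiff, gb, g0, g1⟩ := keyCore f hd hb ha
  have sp := sp0 g gdiff gb
  rw [g0, g1] at sp
  have hpos : (0:ℝ) < 1 - ‖f 0‖ ^ 2 := by nlinarith [norm_nonneg (f 0)]
  rw [norm_div, norm_div, dC_eq, Complex.norm_real, Real.norm_eq_abs, abs_of_pos hpos, norm_mul, norm_pow,
    Complex.norm_real, Real.norm_eq_abs, abs_of_pos hpos, Complex.norm_two] at sp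
  rw [div_le_iff₀ (by positivity)] at sp
  rw [dC_eq]
  exact sp.trans_eq (by ring)


lemma coeff_facts (ω : ℂ → ℂ) (c : ℕ → ℂ)
    (hc : ∀ z ∈ ball (0:ℂ) 1, HasSum (fun n : ℕ => c (n + 1) * z ^ (n + 1)) (ω z)) :
    ∀ n : ℕ, iteratedDeriv n ω 0 = (n.factorial : ℂ) * (if n = 0 then 0 else c n) := by
  set c' : ℕ → ℂ := fun n => if n = 0 then 0 else c n with hc'
  set p : FormalMultilinearSeries ℂ ℂ ℂ := FormalMultilinearSeries.ofScalars ℂ c' with hp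
  have hsum : ∀ y : ℂ, ‖y‖ < 1 → HasSum (fun n => c' n * y ^ n) (ω y) := by
    intro y hy
    have h1 := hc y (by simpa [mem_ball, dist_eq_norm] using hy)
    have h2 : ∀ n : ℕ, c' (n + 1) * y ^ (n + 1) = c (n + 1) * y ^ (n + 1) := by
      intro n; simp [hc']
    have h3 : HasSum (fun n : ℕ => c' (n + 1) * y ^ (n + 1)) (ω y) := by
      simpa only [h2] using h1
    have h5 : HasSum (fun n : ℕ => c' (n + 1) * y ^ (n + 1))
        ((ω y) - ∑ i ∈ Finset.range 1, c' i * y ^ i) := by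
      simpa [hc'] using h3
    simpa using (hasSum_nat_add_iff' (f := fun n => c' n * y ^ n) 1).mp h5
  have hr : (1 : ENNReal) ≤ p.radius := by
    refine ENNReal.le_of_forall_nnreal_lt fun r hr => ?_
    have hry : ‖((r : ℝ) : ℂ)‖ < 1 := by
      rw [Complex.norm_real, Real.norm_eq_abs, _root_.abs_of_nonneg r.coe_nonneg]
      exact_mod_cast hr
    have hs := (hsum _ hry).summable
    have hs2 : Summable fun n => ‖c' n * ((r:ℝ):ℂ) ^ n‖ :=
      hs.norm
    refine p.le_radius_of_summable ?_
    have : ∀ n, ‖p n‖ * (r:ℝ) ^ n = ‖c' n * ((r:ℝ):ℂ) ^ n‖ := by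
      intro n
      rw [hp, FormalMultilinearSeries.ofScalars_norm, norm_mul, norm_pow]
      simp [Complex.norm_real, Real.norm_eq_abs, _root_.abs_of_nonneg r.coe_nonneg]
    simpa only [this] using hs2
  have hF : HasFPowerSeriesOnBall ω p 0 1 :=
    { r_le := hr
      r_pos := one_pos
      hasSum := by
        intro y hy
        have hy' : ‖y‖ < 1 := by
          simpa [edist_eq_enorm_sub, ← ofReal_norm, ENNReal.ofReal_lt_one] using hy
        have := hsum y hy'
        simp only [zero_add]
        refine this.congr_fun fun n => ?_
        rw [hp, FormalMultilinearSeries.ofScalars_apply_eq, smul_eq_mul] }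
  intro n
  have := hF.factorial_smul (1 : ℂ) n
  rw [FormalMultilinearSeries.ofScalars_apply_eq] at this
  rw [iteratedDeriv_eq_iteratedFDeriv, ← this]
  simp [hc']

lemma arith_final (A B m d : ℝ) (hA0 : 0 ≤ A) (hfac : d = (1 - A) * (1 + A))
    (hA1 : A < 1) (hmu : m * (1 + A) ≤ 4 / 3 * A) (hm0 : 0 ≤ m) :
    A * (d ^ 2 - 4 * B ^ 2) + 4 * A ^ 2 * B ^ 2 + 3 * d * m * B ^ 2
      ≤ 1 / 3 * A * d * (3 * d) := by
  have hBB : (0:ℝ) ≤ B ^ 2 := sq_nonneg B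
  have hkey : 3 * d * m ≤ 4 * A * (1 - A) := by
    rw [hfac]
    nlinarith [hmu, (by linarith : (0:ℝ) ≤ 1 - A)]
  nlinarith [mul_le_mul_of_nonneg_right hkey hBB]

theorem stmt_14 (ω : ℂ → ℂ) (c : ℕ → ℂ) (μ : ℂ)
    (hd : DifferentiableOn ℂ ω (ball 0 1))
    (h0 : ω 0 = 0)
    (hb : ∀ z ∈ ball (0:ℂ) 1, ‖deriv ω z‖ ≤ 1)
    (hc : ∀ z ∈ ball (0:ℂ) 1, HasSum (fun n : ℕ => c (n + 1) * z ^ (n + 1)) (ω z))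
    (h1 : ‖μ‖ ≤ (4/3) * ‖c 1‖ / (1 + ‖c 1‖)) :
    ‖c 1 * c 3 - μ * c 2^2‖ ≤ (1/3) * ‖c 1‖ * (1 - ‖c 1‖^2) := by
  have h0mem : (0:ℂ) ∈ ball (0:ℂ) 1 := mem_ball_self one_pos
  set f : ℂ → ℂ := deriv ω with hf
  have hfd : DifferentiableOn ℂ f (ball 0 1) :=
    ((hd.analyticOnNhd isOpen_ball).deriv).differentiableOn
  have cf := coeff_facts ω c hc
  have e1 : iteratedDeriv 1 ω = f := iteratedDeriv_one
  have e2 : iteratedDeriv 2 ω = deriv f := by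
    rw [show (2:ℕ) = 1 + 1 from rfl, iteratedDeriv_succ, e1]
  have e3 : iteratedDeriv 3 ω = deriv (deriv f) := by
    rw [show (3:ℕ) = 2 + 1 from rfl, iteratedDeriv_succ, e2]
  have f0 : f 0 = c 1 := by
    have := cf 1; rw [e1] at this; simpa [Nat.factorial] using this
  have f1 : deriv f 0 = 2 * c 2 := by
    have := cf 2; rw [e2] at this; simpa [Nat.factorial] using this
  have f2 : deriv (deriv f) 0 = 6 * c 3 := by
    have := cf 3; rw [e3] at this; simpa [Nat.factorial] using this
  have hA1 : ‖c 1‖ ≤ 1 := by rw [← f0]; exact hb 0 h0mem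
  set A : ℝ := ‖c 1‖ with hA
  set B : ℝ := ‖c 2‖ with hB
  set m : ℝ := ‖μ‖ with hm
  rcases hA1.lt_or_eq with ha | ha
  · -- |c 1| < 1
    set d : ℝ := 1 - A ^ 2 with hdd
    have hd0 : (0:ℝ) < d := by
      have := norm_nonneg (c 1); nlinarith
    have haf : ‖f 0‖ < 1 := by rw [f0]; exact ha
    have key := schur2 f hfd hb haf
    rw [f0, f1, f2] at key
    -- rewrite key into real form
    rw [dC_eq] at key
    have habs2 : ‖2 * c 2‖ = 2 * B := by
      rw [norm_mul, Complex.norm_two, hB]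
    rw [habs2] at key
    have key2 : ‖6 * c 3 * ((d:ℝ):ℂ) + 2 * (starRingEnd ℂ) (c 1) * (2 * c 2) ^ 2‖
        ≤ 2 * d ^ 2 - 8 * B ^ 2 := by
      have hrhs : 2 * (1 - ‖c 1‖ ^ 2) ^ 2 * (1 - (2 * B / (1 - ‖c 1‖ ^ 2)) ^ 2)
          = 2 * d ^ 2 - 8 * B ^ 2 := by
        rw [← hA, ← hdd]; field_simp; ring
      rw [hrhs] at key
      exact key
    have habsT : ‖3 * c 3 * ((d:ℝ):ℂ) + 4 * (starRingEnd ℂ) (c 1) * c 2 ^ 2‖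
        ≤ d ^ 2 - 4 * B ^ 2 := by
      have e : 6 * c 3 * ((d:ℝ):ℂ) + 2 * (starRingEnd ℂ) (c 1) * (2 * c 2) ^ 2
          = 2 * (3 * c 3 * ((d:ℝ):ℂ) + 4 * (starRingEnd ℂ) (c 1) * c 2 ^ 2) := by ring
      rw [e, norm_mul, Complex.norm_two] at key2
      linarith
    -- decompose the target quantity
    have hd0C : ((d:ℝ):ℂ) ≠ 0 := by
      simpa using ne_of_gt hd0
    have eq1 : c 1 * c 3 - μ * c 2 ^ 2
        = (c 1 / (3 * ((d:ℝ):ℂ))) * (3 * c 3 * ((d:ℝ):ℂ) + 4 * (starRingEnd ℂ) (c 1) * c 2 ^ 2)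
          - ((4 * c 1 * (starRingEnd ℂ) (c 1)) / (3 * ((d:ℝ):ℂ)) + μ) * c 2 ^ 2 := by
      field_simp
      ring
    have habs3d : ‖3 * ((d:ℝ):ℂ)‖ = 3 * d := by
      rw [norm_mul, Complex.norm_real, Real.norm_eq_abs, _root_.abs_of_pos hd0]
      norm_num
    have t1 : ‖(c 1 / (3 * ((d:ℝ):ℂ))) *
          (3 * c 3 * ((d:ℝ):ℂ) + 4 * (starRingEnd ℂ) (c 1) * c 2 ^ 2)‖
        ≤ A / (3 * d) * (d ^ 2 - 4 * B ^ 2) := by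
      rw [norm_mul, norm_div, habs3d]
      exact mul_le_mul_of_nonneg_left habsT (by positivity)
    have t2 : ‖((4 * c 1 * (starRingEnd ℂ) (c 1)) / (3 * ((d:ℝ):ℂ)) + μ) * c 2 ^ 2‖
        ≤ (4 * A ^ 2 / (3 * d) + m) * B ^ 2 := by
      rw [norm_mul, norm_pow]
      refine mul_le_mul_of_nonneg_right ?_ (by positivity)
      refine (norm_add_le _ _).trans ?_
      rw [norm_div, habs3d, norm_mul, norm_mul, Complex.norm_conj, ← hA, ← hm]
      have h4 : ‖(4:ℂ)‖ * A * A = 4 * A ^ 2 := by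
        rw [show (4:ℂ) = ((4:ℝ):ℂ) by norm_num, Complex.norm_real, Real.norm_eq_abs]
        rw [_root_.abs_of_nonneg (by norm_num : (0:ℝ) ≤ 4)]
        ring
      rw [h4]
    -- triangle inequality and final arithmetic
    have tri : ‖c 1 * c 3 - μ * c 2 ^ 2‖
        ≤ A / (3 * d) * (d ^ 2 - 4 * B ^ 2) + (4 * A ^ 2 / (3 * d) + m) * B ^ 2 := by
      rw [eq1]
      refine le_trans ?_ (add_le_add t1 t2)
      have tri0 := norm_sub_le
        ((c 1 / (3 * ((d:ℝ):ℂ))) * (3 * c 3 * ((d:ℝ):ℂ) + 4 * (starRingEnd ℂ) (c 1) * c 2 ^ 2))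
        (((4 * c 1 * (starRingEnd ℂ) (c 1)) / (3 * ((d:ℝ):ℂ)) + μ) * c 2 ^ 2)
      exact tri0
    refine tri.trans ?_
    have hmu : m * (1 + A) ≤ 4 / 3 * A := by
      have hp : (0:ℝ) < 1 + A := by positivity
      exact (le_div_iff₀ hp).mp h1
    have expand : A / (3 * d) * (d ^ 2 - 4 * B ^ 2) + (4 * A ^ 2 / (3 * d) + m) * B ^ 2
        = (A * (d ^ 2 - 4 * B ^ 2) + 4 * A ^ 2 * B ^ 2 + 3 * d * m * B ^ 2) / (3 * d) := by
      field_simp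
      ring
    rw [expand, div_le_iff₀ (by positivity)]
    exact arith_final A B m d (by rw [hA]; exact norm_nonneg _)
      (by rw [hdd]; ring) ha hmu (by rw [hm]; exact norm_nonneg _)
  · -- |c 1| = 1
    have haf : ‖f 0‖ = 1 := by rw [f0, ← hA, ← ha]
    have heq := const_ball hfd hb haf
    have hc2 : c 2 = 0 := by
      have := sp0 f hfd hb
      rw [f1, haf] at this
      simp only [norm_mul, Complex.norm_two] at this
      have : ‖c 2‖ = 0 := by linarith [norm_nonneg (c 2)]
      exact norm_eq_zero.mp this
    have hder0 : ∀ z ∈ ball (0:ℂ) 1, deriv f z = 0 := by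
      intro z hz
      have hev : f =ᶠ[nhds z] fun _ => f 0 :=
        Filter.eventuallyEq_of_mem (isOpen_ball.mem_nhds hz) (fun w hw => heq hw)
      rw [hev.deriv_eq, deriv_const]
    have hc3 : c 3 = 0 := by
      have hev : deriv f =ᶠ[nhds (0:ℂ)] fun _ => 0 :=
        Filter.eventuallyEq_of_mem (isOpen_ball.mem_nhds h0mem) hder0
      have h6 : deriv (deriv f) 0 = 0 := by rw [hev.deriv_eq, deriv_const]
      rw [f2] at h6
      linear_combination h6 / 6
    rw [hc2, hc3, ha]
    norm_num
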